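/- Let A₁,…,Aₘ be complex positive semidefinite n×n matrices and let B be a complex Hermitian n×n matrix. Then the polynomial f(z₁,…,zₘ) = det(z₁A₁ + ⋯ + zₘAₘ + B) is either identically zero or real stable. -/

import Mathlib

open MvPolynomial
open scoped ComplexOrder
open Matrix

private lemma mysum_mulVec {ι N : Type*} [Fintype ι] [Fintype N] (M : ι → Matrix N N ℂ)
    (v : N → ℂ) : (∑ i, M i) *ᵥ v = ∑ i, M i *ᵥ v := by
  ext j
  simp only [Matrix.mulVec, dotProduct, Matrix.sum_apply, Finset.sum_apply,
    Finset.sum_mul]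
  rw [Finset.sum_comm]

private lemma mydp_sum {ι N : Type*} [Fintype ι] [Fintype N] (u : N → ℂ) (w : ι → N → ℂ) :
    u ⬝ᵥ (∑ i, w i) = ∑ i, u ⬝ᵥ w i := by
  simp only [dotProduct, Finset.sum_apply, Finset.mul_sum]
  rw [Finset.sum_comm]

/-- If `A₁,…,Aₘ` are complex positive semidefinite matrices and `B` is
Hermitian, then `det(z₁A₁ + ⋯ + zₘAₘ + B)` is identically zero or real
stable. -/
theorem stmt_5 {m n : ℕ} (A : Fin m → Matrix (Fin n) (Fin n) ℂ)
    (hA : ∀ i, (A i).PosSemidef)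
    (B : Matrix (Fin n) (Fin n) ℂ) (hB : B.IsHermitian)
    (f : MvPolynomial (Fin m) ℂ)
    (hf : f = Matrix.det (∑ i, (X i : MvPolynomial (Fin m) ℂ) • (A i).map C + B.map C)) :
    f = 0 ∨
      ((∀ z : Fin m → ℂ, (∀ i, 0 < (z i).im) → eval z f ≠ 0) ∧
        ∀ d : Fin m →₀ ℕ, (coeff d f).im = 0) := by
  classical
  -- Evaluation formula
  have heval : ∀ z : Fin m → ℂ, eval z f = ((∑ i, z i • A i) + B).det := by
    intro z
    rw [hf, RingHom.map_det]
    congr 1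
    ext j k
    simp [Matrix.add_apply, Matrix.sum_apply, Matrix.smul_apply, Matrix.map_apply,
      smul_eq_mul]
  by_cases h : ∃ z : Fin m → ℂ, (∀ i, 0 < (z i).im) ∧ eval z f = 0
  · -- f is identically zero
    left
    obtain ⟨z, hz, hz0⟩ := h
    rw [heval z] at hz0
    obtain ⟨v, hv, hMv⟩ := Matrix.exists_mulVec_eq_zero_iff.mpr hz0
    -- v* M v = 0
    have hdot : star v ⬝ᵥ ((∑ i, z i • A i) + B) *ᵥ v = 0 := by
      rw [hMv, dotProduct_zero]
    have hexp : (∑ i, z i * (star v ⬝ᵥ A i *ᵥ v)) + star v ⬝ᵥ B *ᵥ v = 0 := by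
      rw [← hdot, Matrix.add_mulVec, dotProduct_add, mysum_mulVec, mydp_sum]
      congr 1
      refine Finset.sum_congr rfl fun i _ => ?_
      rw [Matrix.smul_mulVec, dotProduct_smul, smul_eq_mul]
    -- each quadratic form value is a nonnegative real
    have hci : ∀ i, 0 ≤ star v ⬝ᵥ A i *ᵥ v := fun i => (hA i).dotProduct_mulVec_nonneg v
    have hcim : ∀ i, (star v ⬝ᵥ A i *ᵥ v).im = 0 := fun i => by
      have := hci i
      rw [Complex.le_def] at this
      simpa using this.2.symm
    have hcre : ∀ i, 0 ≤ (star v ⬝ᵥ A i *ᵥ v).re := fun i => by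
      have := hci i
      rw [Complex.le_def] at this
      simpa using this.1
    -- B's quadratic form is real
    have hbim : (star v ⬝ᵥ B *ᵥ v).im = 0 := by
      have hself : star (star v ⬝ᵥ B *ᵥ v) = star v ⬝ᵥ B *ᵥ v := by
        have hsd := congrArg star (star_dotProduct v (B *ᵥ v))
        rw [star_star] at hsd
        rw [hsd, star_mulVec, ← dotProduct_mulVec, hB.eq]
      have h2 := congrArg Complex.im hself
      simp only [Complex.star_def, Complex.conj_im] at h2
      linarith
    -- take imaginary parts
    have him : ∑ i, (z i).im * (star v ⬝ᵥ A i *ᵥ v).re = 0 := by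
      have h2 := congrArg Complex.im hexp
      simp only [Complex.add_im, Complex.im_sum, Complex.mul_im, Complex.zero_im] at h2
      have h3 : ∀ i ∈ Finset.univ, (z i).re * (star v ⬝ᵥ A i *ᵥ v).im +
          (z i).im * (star v ⬝ᵥ A i *ᵥ v).re = (z i).im * (star v ⬝ᵥ A i *ᵥ v).re := by
        intro i _
        rw [hcim i]; ring
      rw [Finset.sum_congr rfl h3] at h2
      rw [hbim] at h2
      linarith
    -- each term is nonneg, so all zero
    have hA0 : ∀ i, A i *ᵥ v = 0 := by
      intro i
      have hterm : (z i).im * (star v ⬝ᵥ A i *ᵥ v).re = 0 :=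
        Finset.sum_eq_zero_iff_of_nonneg
          (fun i _ => mul_nonneg (le_of_lt (hz i)) (hcre i)) |>.mp him i (Finset.mem_univ i)
      have hre0 : (star v ⬝ᵥ A i *ᵥ v).re = 0 := by
        rcases mul_eq_zero.mp hterm with h' | h'
        · exact absurd h' (ne_of_gt (hz i))
        · exact h'
      have hczero : star v ⬝ᵥ A i *ᵥ v = 0 :=
        Complex.ext (by simpa using hre0) (by simpa using hcim i)
      exact ((hA i).dotProduct_mulVec_zero_iff v).mp hczero
    have hB0 : B *ᵥ v = 0 := by
      have hsum0 : (∑ i, z i • A i) *ᵥ v = 0 := by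
        rw [mysum_mulVec]
        refine Finset.sum_eq_zero fun i _ => ?_
        rw [Matrix.smul_mulVec, hA0 i, smul_zero]
      have h2 := hMv
      rw [Matrix.add_mulVec, hsum0, zero_add] at h2
      exact h2
    -- now f vanishes everywhere
    refine MvPolynomial.funext fun w => ?_
    rw [heval w, map_zero]
    apply Matrix.exists_mulVec_eq_zero_iff.mp
    refine ⟨v, hv, ?_⟩
    rw [Matrix.add_mulVec, mysum_mulVec, hB0]
    simp [Matrix.smul_mulVec, hA0]
  · right
    push_neg at h
    refine ⟨h, ?_⟩
    -- real coefficients via conjugation symmetry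
    have hconj : MvPolynomial.map (starRingEnd ℂ) f = f := by
      conv_rhs => rw [hf, ← Matrix.det_transpose]
      rw [hf, RingHom.map_det]
      congr 1
      ext j k
      simp only [RingHom.mapMatrix_apply, Matrix.map_apply, Matrix.transpose_apply,
        Matrix.add_apply, Matrix.sum_apply, Matrix.smul_apply, smul_eq_mul]
      rw [map_add, map_sum]
      simp only [_root_.map_mul, MvPolynomial.map_X, MvPolynomial.map_C]
      simp only [show ∀ x, (starRingEnd ℂ) (A x j k) = A x k j from fun x => by
          rw [starRingEnd_apply]; exact (hA x).1.apply k j,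
        show (starRingEnd ℂ) (B j k) = B k j from by
          rw [starRingEnd_apply]; exact hB.apply k j]
    intro d
    have hcd : coeff d (MvPolynomial.map (starRingEnd ℂ) f) = coeff d f := by rw [hconj]
    rw [MvPolynomial.coeff_map] at hcd
    have h2 := congrArg Complex.im hcd
    simp only [Complex.conj_im] at h2
    linarith
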